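/- Let the LT propagation on the multiplex system G^{1..k} start from a seed set S ⊆ U and the LT propagation on its clique lossless coupled network G start from S' = { s^0 : s ∈ S }. Then for every d ≥ 1 and every user u, the following three conditions are equivalent: (1) u ∈ A^d(G^{1..k},S); (2) there exists i ∈ {1,…,k} such that the representative vertex u^i belongs to A^{2d-1}(G,S'); (3) the gateway vertex u^0 belongs to A^{2d}(G,S'). -/

import Mathlib

open scoped Classical

/-- LT active sets on a single directed weighted network `G = (V, w, θ)`:
`ltIter w θ S 0 = S` and
`ltIter w θ S (t+1) = ltIter w θ S t ∪ { x | Σ_{y ∈ A^t} w y x ≥ θ x }`. -/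
noncomputable def ltIter {V : Type*} [Fintype V] [DecidableEq V]
    (w : V → V → ℝ) (θ : V → ℝ) (S : Finset V) : ℕ → Finset V
  | 0 => S
  | t + 1 =>
      ltIter w θ S t ∪
        Finset.univ.filter (fun x => θ x ≤ ∑ y ∈ ltIter w θ S t, w y x)

/-- LT active sets on the multiplex system `G^{1..k}`:
`A^0 = S` and `A^{t+1} = A^t ∪ { u | ∃ i, Σ_{v ∈ A^t} w^i v u ≥ θ^i u }`. -/
noncomputable def multiIter {U : Type*} [Fintype U] [DecidableEq U] {k : ℕ}
    (w : Fin k → U → U → ℝ) (θ : Fin k → U → ℝ) (S : Finset U) : ℕ → Finset U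
  | 0 => S
  | t + 1 =>
      multiIter w θ S t ∪
        Finset.univ.filter
          (fun u => ∃ i : Fin k, θ i u ≤ ∑ v ∈ multiIter w θ S t, w i v u)

/-- Thresholds of the clique lossless coupled network.  The vertex `(u, none)` is the
gateway vertex `u⁰` (threshold 1), and `(u, some i)` is the representative vertex `uⁱ`
(threshold `θ^i(u)` if `u ∈ V^i`, and 1 otherwise, i.e. for dummy vertices). -/
noncomputable def cliqueTheta {U : Type*} [DecidableEq U] {k : ℕ}
    (Vmem : Fin k → Finset U) (θ : Fin k → U → ℝ) : U × Option (Fin k) → ℝ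
  | (_, none) => 1
  | (u, some i) => if u ∈ Vmem i then θ i u else 1

/-- Edge weights of the clique lossless coupled network:
`w(u⁰, vⁱ) = w^i(u, v)` for users `u ≠ v` and `1 ≤ i ≤ k`;
`w(uⁱ, uʲ) = θ(uʲ)` for all `0 ≤ i ≠ j ≤ k` (synchronization clique);
all other weights are 0. -/
noncomputable def cliqueW {U : Type*} [DecidableEq U] {k : ℕ}
    (Vmem : Fin k → Finset U) (w : Fin k → U → U → ℝ) (θ : Fin k → U → ℝ) :
    U × Option (Fin k) → U × Option (Fin k) → ℝ :=
  fun x y =>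
    if x.1 = y.1 then
      if x.2 = y.2 then 0 else cliqueTheta Vmem θ y
    else
      match x.2, y.2 with
      | none, some i => w i x.1 y.1
      | _, _ => 0

section Aux
variable {U : Type*} [Fintype U] [DecidableEq U] {k : ℕ}
variable (Vmem : Fin k → Finset U) (w : Fin k → U → U → ℝ) (θ : Fin k → U → ℝ)

lemma ltMem {V : Type*} [Fintype V] [DecidableEq V]
    (W : V → V → ℝ) (Θ : V → ℝ) (S : Finset V) (t : ℕ) (x : V) :
    x ∈ ltIter W Θ S (t+1) ↔ x ∈ ltIter W Θ S t ∨ Θ x ≤ ∑ y ∈ ltIter W Θ S t, W y x := by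
  simp [ltIter]

lemma cliqueW_to_none (v : U) (o : Option (Fin k)) (u : U) :
    cliqueW Vmem w θ (v, o) (u, none) = if v = u ∧ o ≠ none then 1 else 0 := by
  cases o <;> simp [cliqueW, cliqueTheta] <;> split_ifs <;> simp_all

lemma cliqueW_to_some (v : U) (o : Option (Fin k)) (u : U) (i : Fin k) :
    cliqueW Vmem w θ (v, o) (u, some i) =
      if v = u then (if o = some i then 0 else cliqueTheta Vmem θ (u, some i))
      else (if o = none then w i v u else 0) := by
  cases o <;> simp [cliqueW] <;> split_ifs <;> simp_all

lemma cliqueTheta_pos (hθpos : ∀ i u, 0 < θ i u) (x : U × Option (Fin k)) :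
    0 < cliqueTheta Vmem θ x := by
  obtain ⟨u, o⟩ := x
  cases o with
  | none => norm_num [cliqueTheta]
  | some i =>
      simp only [cliqueTheta]
      split_ifs
      · exact hθpos i u
      · norm_num

lemma cliqueW_nonneg (hw0 : ∀ i v u, 0 ≤ w i v u) (hθpos : ∀ i u, 0 < θ i u)
    (x y : U × Option (Fin k)) : 0 ≤ cliqueW Vmem w θ x y := by
  obtain ⟨v, o⟩ := x; obtain ⟨u, o'⟩ := y
  cases o' with
  | none => rw [cliqueW_to_none]; split_ifs <;> norm_num
  | some i =>
      rw [cliqueW_to_some]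
      split_ifs
      · norm_num
      · exact (cliqueTheta_pos Vmem θ hθpos _).le
      · exact hw0 _ _ _
      · norm_num


/-- activation of a gateway vertex -/
lemma gate_act (B : Finset (U × Option (Fin k))) (u : U) :
    (1 ≤ ∑ y ∈ B, cliqueW Vmem w θ y (u, none)) ↔ ∃ j, (u, some j) ∈ B := by
  have hrw : ∀ y ∈ B, cliqueW Vmem w θ y (u, none)
      = if y.1 = u ∧ y.2 ≠ none then (1:ℝ) else 0 := by
    rintro ⟨v, o⟩ _; exact cliqueW_to_none Vmem w θ v o u
  rw [Finset.sum_congr rfl hrw]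
  constructor
  · intro h
    by_contra hc
    push_neg at hc
    have h0 : ∑ y ∈ B, (if y.1 = u ∧ y.2 ≠ none then (1:ℝ) else 0) = 0 := by
      apply Finset.sum_eq_zero
      rintro ⟨v, o⟩ hy
      simp only [ite_eq_right_iff, one_ne_zero]
      rintro ⟨rfl, ho⟩
      obtain ⟨j, rfl⟩ := Option.ne_none_iff_exists'.mp ho
      exact absurd hy (hc j)
    rw [h0] at h; linarith
  · rintro ⟨j, hj⟩
    have := Finset.single_le_sum (f := fun y : U × Option (Fin k) =>
      if y.1 = u ∧ y.2 ≠ none then (1:ℝ) else 0)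
      (fun y _ => by split_ifs <;> norm_num) hj
    simpa using this

/-- the filtered gateway part of B, as an image -/
lemma filter_none_eq (B : Finset (U × Option (Fin k))) :
    B.filter (fun y => y.2 = none)
      = (Finset.univ.filter (fun v : U => (v, none) ∈ B)).image
          (fun v => (v, (none : Option (Fin k)))) := by
  ext ⟨v, o⟩
  simp only [Finset.mem_filter, Finset.mem_image, Finset.mem_univ, true_and]
  constructor
  · rintro ⟨hb, rfl⟩; exact ⟨v, hb, rfl⟩
  · rintro ⟨v', hb, he⟩
    obtain ⟨rfl, rfl⟩ := Prod.mk.injEq .. ▸ he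
    simp_all

lemma gwsum_eq (B : Finset (U × Option (Fin k))) (u : U) (i : Fin k) :
    ∑ v ∈ Finset.univ.filter (fun v : U => (v, none) ∈ B), w i v u
      = ∑ y ∈ B.filter (fun y => y.2 = none), w i y.1 u := by
  rw [filter_none_eq, Finset.sum_image (by intro a _ b _ h; simpa using h)]

/-- the incoming sum of a representative vertex when no other same-user vertex is present -/
lemma rep_sum_eq (B : Finset (U × Option (Fin k))) (u : U) (i : Fin k)
    (h : ∀ y ∈ B, y.1 = u → y = (u, some i)) :
    ∑ y ∈ B, cliqueW Vmem w θ y (u, some i)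
      = ∑ v ∈ Finset.univ.filter (fun v : U => (v, none) ∈ B), w i v u := by
  rw [gwsum_eq, Finset.sum_filter]
  apply Finset.sum_congr rfl
  rintro ⟨v, o⟩ hy
  rw [cliqueW_to_some]
  by_cases hv : v = u
  · have := h (v, o) hy hv
    simp only [Prod.mk.injEq] at this
    obtain ⟨rfl, rfl⟩ := this
    simp
  · simp [hv]

/-- the incoming sum of a representative vertex dominates the gateway contributions -/
lemma rep_sum_ge (hw0 : ∀ i v u, 0 ≤ w i v u) (hθpos : ∀ i u, 0 < θ i u)
    (B : Finset (U × Option (Fin k))) (u : U) (i : Fin k)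
    (hu : (u, (none : Option (Fin k))) ∉ B) :
    ∑ v ∈ Finset.univ.filter (fun v : U => (v, none) ∈ B), w i v u
      ≤ ∑ y ∈ B, cliqueW Vmem w θ y (u, some i) := by
  rw [gwsum_eq]
  have h1 : ∑ y ∈ B.filter (fun y => y.2 = none), w i y.1 u
      = ∑ y ∈ B.filter (fun y => y.2 = none), cliqueW Vmem w θ y (u, some i) := by
    apply Finset.sum_congr rfl
    rintro ⟨v, o⟩ hy
    simp only [Finset.mem_filter] at hy
    obtain ⟨hb, rfl⟩ := hy
    have hv : v ≠ u := by rintro rfl; exact hu hb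
    rw [cliqueW_to_some]
    simp [hv]
  rw [h1]
  exact Finset.sum_le_sum_of_subset_of_nonneg (Finset.filter_subset _ _)
    (fun y _ _ => cliqueW_nonneg Vmem w θ hw0 hθpos y _)

/-- a same-user vertex in B activates the representative vertex -/
lemma rep_single_le (hw0 : ∀ i v u, 0 ≤ w i v u) (hθpos : ∀ i u, 0 < θ i u)
    (B : Finset (U × Option (Fin k))) (u : U) (i : Fin k)
    (o : Option (Fin k)) (hy : (u, o) ∈ B) (h2 : o ≠ some i) :
    cliqueTheta Vmem θ (u, some i) ≤ ∑ y ∈ B, cliqueW Vmem w θ y (u, some i) := by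
  have hterm : cliqueW Vmem w θ (u, o) (u, some i) = cliqueTheta Vmem θ (u, some i) := by
    rw [cliqueW_to_some]; simp [h2]
  calc cliqueTheta Vmem θ (u, some i) = cliqueW Vmem w θ (u, o) (u, some i) := hterm.symm
    _ ≤ ∑ y ∈ B, cliqueW Vmem w θ y (u, some i) :=
        Finset.single_le_sum (fun y _ => cliqueW_nonneg Vmem w θ hw0 hθpos y _) hy

/-- comparing with the clique threshold is the same as comparing with the original one -/
lemma theta_iff (hwV : ∀ i v u, v ∉ Vmem i ∨ u ∉ Vmem i → w i v u = 0)
    (hθpos : ∀ i u, 0 < θ i u) (i : Fin k) (u : U) (X : Finset U) :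
    (cliqueTheta Vmem θ (u, some i) ≤ ∑ v ∈ X, w i v u)
      ↔ (θ i u ≤ ∑ v ∈ X, w i v u) := by
  by_cases h : u ∈ Vmem i
  · simp [cliqueTheta, h]
  · have hs : ∑ v ∈ X, w i v u = 0 :=
      Finset.sum_eq_zero (fun v _ => hwV i v u (Or.inr h))
    simp only [cliqueTheta, h, if_false, hs]
    constructor <;> intro hh <;> linarith [hθpos i u]


lemma multiMem (S : Finset U) (t : ℕ) (u : U) :
    u ∈ multiIter w θ S (t+1) ↔
      u ∈ multiIter w θ S t ∨ ∃ i, θ i u ≤ ∑ v ∈ multiIter w θ S t, w i v u := by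
  simp [multiIter]

lemma claim_step (hk : 1 ≤ k)
    (hw0 : ∀ i v u, 0 ≤ w i v u)
    (hwV : ∀ i v u, v ∉ Vmem i ∨ u ∉ Vmem i → w i v u = 0)
    (hθpos : ∀ i u, 0 < θ i u)
    (S : Finset U) (t m : ℕ)
    (hgw : ∀ u : U, ((u, (none : Option (Fin k))) ∈
        ltIter (cliqueW Vmem w θ) (cliqueTheta Vmem θ)
          (S.image (fun s => (s, (none : Option (Fin k))))) t ↔ u ∈ multiIter w θ S m))
    (hrep : ∀ u : U, (∃ i : Fin k, (u, some i) ∈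
        ltIter (cliqueW Vmem w θ) (cliqueTheta Vmem θ)
          (S.image (fun s => (s, (none : Option (Fin k))))) t) → u ∈ multiIter w θ S m) :
    (∀ u : U, ((∃ i : Fin k, (u, some i) ∈
        ltIter (cliqueW Vmem w θ) (cliqueTheta Vmem θ)
          (S.image (fun s => (s, (none : Option (Fin k))))) (t+1)) ↔
        u ∈ multiIter w θ S (m+1)))
    ∧ (∀ u : U, ((u, (none : Option (Fin k))) ∈
        ltIter (cliqueW Vmem w θ) (cliqueTheta Vmem θ)
          (S.image (fun s => (s, (none : Option (Fin k))))) (t+1) ↔ u ∈ multiIter w θ S m))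
    ∧ (∀ u : U, ((∃ i : Fin k, (u, some i) ∈
        ltIter (cliqueW Vmem w θ) (cliqueTheta Vmem θ)
          (S.image (fun s => (s, (none : Option (Fin k))))) (t+2)) ↔
        u ∈ multiIter w θ S (m+1)))
    ∧ (∀ u : U, ((u, (none : Option (Fin k))) ∈
        ltIter (cliqueW Vmem w θ) (cliqueTheta Vmem θ)
          (S.image (fun s => (s, (none : Option (Fin k))))) (t+2) ↔
        u ∈ multiIter w θ S (m+1))) := by
  set W := cliqueW Vmem w θ with hWdef
  set Θ := cliqueTheta Vmem θ with hΘdef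
  set S' := S.image (fun s => (s, (none : Option (Fin k)))) with hS'def
  have hA : ∀ x : U, x ∈ multiIter w θ S m → x ∈ multiIter w θ S (m+1) :=
    fun x hx => (multiMem w θ S m x).mpr (Or.inl hx)
  -- representative vertices at the odd step
  have hOddRep : ∀ u : U, ((∃ i : Fin k, (u, some i) ∈ ltIter W Θ S' (t+1)) ↔
      u ∈ multiIter w θ S (m+1)) := by
    intro u
    constructor
    · rintro ⟨i, hi⟩
      rw [ltMem] at hi
      rcases hi with hi | hi
      · exact hA u (hrep u ⟨i, hi⟩)
      · by_cases hsame : ∀ y ∈ ltIter W Θ S' t, y.1 = u → y = (u, some i)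
        · rw [hWdef, hΘdef, rep_sum_eq Vmem w θ _ u i hsame] at hi
          have hGw : Finset.univ.filter (fun v : U => (v, (none : Option (Fin k))) ∈
              ltIter W Θ S' t) = multiIter w θ S m := by
            ext v
            simp only [Finset.mem_filter, Finset.mem_univ, true_and, hgw v]
          rw [hGw, theta_iff Vmem w θ hwV hθpos] at hi
          exact (multiMem w θ S m u).mpr (Or.inr ⟨i, hi⟩)
        · push_neg at hsame
          obtain ⟨y, hyB, hy1, -⟩ := hsame
          obtain ⟨v, o⟩ := y
          replace hy1 : v = u := hy1
          subst hy1
          cases o with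
          | none => exact hA v ((hgw v).mp hyB)
          | some j => exact hA v (hrep v ⟨j, hyB⟩)
    · intro hu
      by_cases hm : u ∈ multiIter w θ S m
      · refine ⟨⟨0, hk⟩, ?_⟩
        rw [ltMem]
        right
        exact rep_single_le Vmem w θ hw0 hθpos _ u ⟨0, hk⟩ none ((hgw u).mpr hm) (by simp)
      · rcases (multiMem w θ S m u).mp hu with hu' | ⟨i, hi⟩
        · exact absurd hu' hm
        refine ⟨i, ?_⟩
        rw [ltMem]
        right
        have hGw : Finset.univ.filter (fun v : U => (v, (none : Option (Fin k))) ∈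
            ltIter W Θ S' t) = multiIter w θ S m := by
          ext v
          simp only [Finset.mem_filter, Finset.mem_univ, true_and, hgw v]
        have hnotB : (u, (none : Option (Fin k))) ∉ ltIter W Θ S' t :=
          fun hc => hm ((hgw u).mp hc)
        have hge := rep_sum_ge Vmem w θ hw0 hθpos (ltIter W Θ S' t) u i hnotB
        rw [hGw] at hge
        exact le_trans ((theta_iff Vmem w θ hwV hθpos i u (multiIter w θ S m)).mpr hi) hge
  -- gateway vertices at the odd step
  have hOddGw : ∀ u : U, ((u, (none : Option (Fin k))) ∈ ltIter W Θ S' (t+1) ↔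
      u ∈ multiIter w θ S m) := by
    intro u
    rw [ltMem]
    constructor
    · rintro (h | h)
      · exact (hgw u).mp h
      · exact hrep u ((gate_act Vmem w θ (ltIter W Θ S' t) u).mp h)
    · intro h
      exact Or.inl ((hgw u).mpr h)
  -- gateway vertices at the even step
  have hEvenGw : ∀ u : U, ((u, (none : Option (Fin k))) ∈ ltIter W Θ S' (t+2) ↔
      u ∈ multiIter w θ S (m+1)) := by
    intro u
    rw [show t+2 = (t+1)+1 from rfl, ltMem]
    constructor
    · rintro (h | h)
      · exact hA u ((hOddGw u).mp h)
      · exact (hOddRep u).mp ((gate_act Vmem w θ (ltIter W Θ S' (t+1)) u).mp h)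
    · intro h
      exact Or.inr ((gate_act Vmem w θ (ltIter W Θ S' (t+1)) u).mpr ((hOddRep u).mpr h))
  -- representative vertices at the even step
  have hEvenRep : ∀ u : U, ((∃ i : Fin k, (u, some i) ∈ ltIter W Θ S' (t+2)) ↔
      u ∈ multiIter w θ S (m+1)) := by
    intro u
    constructor
    · rintro ⟨i, hi⟩
      rw [show t+2 = (t+1)+1 from rfl, ltMem] at hi
      rcases hi with hi | hi
      · exact (hOddRep u).mp ⟨i, hi⟩
      · by_cases hsame : ∀ y ∈ ltIter W Θ S' (t+1), y.1 = u → y = (u, some i)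
        · rw [hWdef, hΘdef, rep_sum_eq Vmem w θ _ u i hsame] at hi
          have hGw : Finset.univ.filter (fun v : U => (v, (none : Option (Fin k))) ∈
              ltIter W Θ S' (t+1)) = multiIter w θ S m := by
            ext v
            simp only [Finset.mem_filter, Finset.mem_univ, true_and, hOddGw v]
          rw [hGw, theta_iff Vmem w θ hwV hθpos] at hi
          exact (multiMem w θ S m u).mpr (Or.inr ⟨i, hi⟩)
        · push_neg at hsame
          obtain ⟨y, hyB, hy1, -⟩ := hsame
          obtain ⟨v, o⟩ := y
          replace hy1 : v = u := hy1
          subst hy1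
          cases o with
          | none => exact hA v ((hOddGw v).mp hyB)
          | some j => exact (hOddRep v).mp ⟨j, hyB⟩
    · intro h
      obtain ⟨i, hi⟩ := (hOddRep u).mpr h
      refine ⟨i, ?_⟩
      rw [show t+2 = (t+1)+1 from rfl, ltMem]
      exact Or.inl hi
  exact ⟨hOddRep, hOddGw, hEvenRep, hEvenGw⟩


lemma key (hk : 1 ≤ k)
    (hw0 : ∀ i v u, 0 ≤ w i v u)
    (hwV : ∀ i v u, v ∉ Vmem i ∨ u ∉ Vmem i → w i v u = 0)
    (hθpos : ∀ i u, 0 < θ i u)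
    (S : Finset U) : ∀ m : ℕ,
    (∀ u : U, ((u, (none : Option (Fin k))) ∈
        ltIter (cliqueW Vmem w θ) (cliqueTheta Vmem θ)
          (S.image (fun s => (s, (none : Option (Fin k))))) (2*m) ↔
        u ∈ multiIter w θ S m))
    ∧ (∀ u : U, (∃ i : Fin k, (u, some i) ∈
        ltIter (cliqueW Vmem w θ) (cliqueTheta Vmem θ)
          (S.image (fun s => (s, (none : Option (Fin k))))) (2*m)) → u ∈ multiIter w θ S m)
  | 0 => by
      constructor
      · intro u
        simp [ltIter, multiIter]
      · intro u
        rintro ⟨i, hi⟩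
        simp [ltIter] at hi
  | (n+1) => by
      obtain ⟨hgw, hrep⟩ := key hk hw0 hwV hθpos S n
      obtain ⟨h1, h2, h3, h4⟩ := claim_step Vmem w θ hk hw0 hwV hθpos S (2*n) n hgw hrep
      have e : 2*(n+1) = 2*n+1+1 := by ring
      rw [e]
      exact ⟨h4, fun u hu => (h3 u).mp hu⟩

end Aux

/-- **Lemma 2.** With the LT propagation on the multiplex system
starting from `S` and on its clique lossless coupled network starting from
`S' = { s⁰ : s ∈ S }`, for every `d ≥ 1` and every user `u` the following are
equivalent: (1) `u ∈ A^d(G^{1..k}, S)`; (2) some representative vertex `uⁱ` is in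
`A^{2d-1}(G, S')`; (3) the gateway vertex `u⁰` is in `A^{2d}(G, S')`. -/
theorem lossless_mapping_equiv
    {U : Type*} [Fintype U] [DecidableEq U] {k : ℕ} (hk : 1 ≤ k)
    (Vmem : Fin k → Finset U) (w : Fin k → U → U → ℝ) (θ : Fin k → U → ℝ)
    (hw0 : ∀ i v u, 0 ≤ w i v u)
    (hwV : ∀ i v u, v ∉ Vmem i ∨ u ∉ Vmem i → w i v u = 0)
    (hθpos : ∀ i u, 0 < θ i u)
    (S : Finset U) (d : ℕ) (hd : 1 ≤ d) (u : U) :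
    (u ∈ multiIter w θ S d ↔
      ∃ i : Fin k, (u, (some i : Option (Fin k))) ∈
        ltIter (cliqueW Vmem w θ) (cliqueTheta Vmem θ)
          (S.image (fun s => (s, (none : Option (Fin k))))) (2 * d - 1)) ∧
    ((∃ i : Fin k, (u, (some i : Option (Fin k))) ∈
        ltIter (cliqueW Vmem w θ) (cliqueTheta Vmem θ)
          (S.image (fun s => (s, (none : Option (Fin k))))) (2 * d - 1)) ↔
      (u, (none : Option (Fin k))) ∈
        ltIter (cliqueW Vmem w θ) (cliqueTheta Vmem θ)
          (S.image (fun s => (s, (none : Option (Fin k))))) (2 * d)) := by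
  obtain ⟨m, rfl⟩ : ∃ m, d = m + 1 := ⟨d - 1, by omega⟩
  obtain ⟨hgw, hrep⟩ := key Vmem w θ hk hw0 hwV hθpos S m
  obtain ⟨h1, h2, h3, h4⟩ := claim_step Vmem w θ hk hw0 hwV hθpos S (2*m) m hgw hrep
  have e1 : 2*(m+1) - 1 = 2*m+1 := by omega
  have e2 : 2*(m+1) = 2*m+1+1 := by ring
  rw [e1, e2]
  exact ⟨(h1 u).symm, (h1 u).trans (h4 u).symm⟩
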